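/- arXiv:2212.00967 — 2 statements merged into one kernel-verified Lean document; each statement's English description precedes it below -/
import Mathlib

section
/- (Proposition 1, edges sharing one node, same SNP) Let v1, v2, v3 be pairwise distinct nodes and p a SNP, and assume σ_f² + 2σ_g² + 2σ_h² > 0. Then Cor(L(v1,v3,p), L(v2,v3,p)) = (σ_f² + σ_g² + σ_h²)/(σ_f² + 2σ_g² + 2σ_h²). -/
open MeasureTheory ProbabilityTheory

/-- Covariance of two real random variables: `Cov(X,Y) = E[(X - E X)(Y - E Y)]`. -/
noncomputable def cov {Ω : Type*} [MeasurableSpace Ω] (μ : Measure Ω) (X Y : Ω → ℝ) : ℝ :=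
  ∫ ω, (X ω - ∫ x, X x ∂μ) * (Y ω - ∫ x, Y x ∂μ) ∂μ

/-- Pearson correlation: `Cor(X,Y) = Cov(X,Y) / (Var(X)^{1/2} Var(Y)^{1/2})`. -/
noncomputable def cor {Ω : Type*} [MeasurableSpace Ω] (μ : Measure Ω) (X Y : Ω → ℝ) : ℝ :=
  cov μ X Y / (Real.sqrt (variance X μ) * Real.sqrt (variance Y μ))

section Helpers

variable {Ω : Type*} [MeasurableSpace Ω] {μ : Measure Ω} [IsProbabilityMeasure μ]

set_option linter.unusedSectionVars false

lemma myint_mul {f g : Ω → ℝ} (hf : MemLp f 2 μ) (hg : MemLp g 2 μ) :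
    Integrable (fun ω => f ω * g ω) μ :=
  memLp_one_iff_integrable.mp
    (MemLp.smul (r := 1) hg hf)

lemma memc {f : Ω → ℝ} (hf : MemLp f 2 μ) :
    MemLp (fun ω => f ω - ∫ x, f x ∂μ) 2 μ := hf.sub (memLp_const _)

lemma int_cc {X Z : Ω → ℝ} (hX : MemLp X 2 μ) (hZ : MemLp Z 2 μ) :
    Integrable (fun ω => (X ω - ∫ x, X x ∂μ) * (Z ω - ∫ x, Z x ∂μ)) μ :=
  myint_mul (memc hX) (memc hZ)

lemma cov_add_left {X Y Z : Ω → ℝ} (hX : MemLp X 2 μ) (hY : MemLp Y 2 μ) (hZ : MemLp Z 2 μ) :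
    cov μ (fun ω => X ω + Y ω) Z = cov μ X Z + cov μ Y Z := by
  unfold cov
  rw [integral_add (hX.integrable one_le_two) (hY.integrable one_le_two),
    ← integral_add (int_cc hX hZ) (int_cc hY hZ)]
  congr 1
  funext ω
  ring

lemma cov_comm (X Y : Ω → ℝ) : cov μ X Y = cov μ Y X := by
  unfold cov; congr 1; funext ω; ring

lemma cov_add_right {X Y Z : Ω → ℝ} (hX : MemLp X 2 μ) (hY : MemLp Y 2 μ) (hZ : MemLp Z 2 μ) :
    cov μ Z (fun ω => X ω + Y ω) = cov μ Z X + cov μ Z Y := by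
  rw [cov_comm, cov_add_left hX hY hZ, cov_comm X Z, cov_comm Y Z]

lemma cov_self {X : Ω → ℝ} (hX : MemLp X 2 μ) : cov μ X X = variance X μ := by
  rw [variance_eq_integral hX.aemeasurable]
  unfold cov
  congr 1
  funext ω
  simp [sq]

lemma cov_indep {X Y : Ω → ℝ} (h : IndepFun X Y μ) (hX : MemLp X 2 μ) (hY : MemLp Y 2 μ) :
    cov μ X Y = 0 := by
  have h' : IndepFun (fun ω => X ω - ∫ x, X x ∂μ) (fun ω => Y ω - ∫ x, Y x ∂μ) μ :=
    h.comp (measurable_id.sub measurable_const) (measurable_id.sub measurable_const)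
  have hXi := (memc hX).integrable one_le_two
  have hYi := (memc hY).integrable one_le_two
  have hmul := h'.integral_mul_eq_mul_integral hXi.aestronglyMeasurable hYi.aestronglyMeasurable
  have hX0 : ∫ ω, (X ω - ∫ x, X x ∂μ) ∂μ = 0 := by
    rw [integral_sub (hX.integrable one_le_two) (integrable_const _)]
    simp
  unfold cov
  calc ∫ ω, (X ω - ∫ x, X x ∂μ) * (Y ω - ∫ x, Y x ∂μ) ∂μ
      = (∫ ω, (X ω - ∫ x, X x ∂μ) ∂μ) * ∫ ω, (Y ω - ∫ x, Y x ∂μ) ∂μ := hmul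
    _ = 0 := by rw [hX0, zero_mul]

lemma cov_expand5 {A B C D E A' B' C' D' E' : Ω → ℝ}
    (hA : MemLp A 2 μ) (hB : MemLp B 2 μ) (hC : MemLp C 2 μ) (hD : MemLp D 2 μ)
    (hE : MemLp E 2 μ) (hA' : MemLp A' 2 μ) (hB' : MemLp B' 2 μ) (hC' : MemLp C' 2 μ)
    (hD' : MemLp D' 2 μ) (hE' : MemLp E' 2 μ) :
    cov μ (fun ω => A ω + B ω + C ω + D ω + E ω) (fun ω => A' ω + B' ω + C' ω + D' ω + E' ω)
    = cov μ A A' + cov μ A B' + cov μ A C' + cov μ A D' + cov μ A E'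
    + cov μ B A' + cov μ B B' + cov μ B C' + cov μ B D' + cov μ B E'
    + cov μ C A' + cov μ C B' + cov μ C C' + cov μ C D' + cov μ C E'
    + cov μ D A' + cov μ D B' + cov μ D C' + cov μ D D' + cov μ D E'
    + cov μ E A' + cov μ E B' + cov μ E C' + cov μ E D' + cov μ E E' := by
  have hABCD : MemLp (fun ω => A ω + B ω + C ω + D ω) 2 μ := ((hA.add hB).add hC).add hD
  have hABC : MemLp (fun ω => A ω + B ω + C ω) 2 μ := (hA.add hB).add hC
  have hAB : MemLp (fun ω => A ω + B ω) 2 μ := hA.add hB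
  have hA'B'C'D' : MemLp (fun ω => A' ω + B' ω + C' ω + D' ω) 2 μ := ((hA'.add hB').add hC').add hD'
  have hA'B'C' : MemLp (fun ω => A' ω + B' ω + C' ω) 2 μ := (hA'.add hB').add hC'
  have hA'B' : MemLp (fun ω => A' ω + B' ω) 2 μ := hA'.add hB'
  have hR : MemLp (fun ω => A' ω + B' ω + C' ω + D' ω + E' ω) 2 μ := (((hA'.add hB').add hC').add hD').add hE'
  rw [cov_add_left hABCD hE hR, cov_add_left hABC hD hR, cov_add_left hAB hC hR,
    cov_add_left hA hB hR,
    cov_add_right hA'B'C'D' hE' hA, cov_add_right hA'B'C' hD' hA,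
    cov_add_right hA'B' hC' hA, cov_add_right hA' hB' hA,
    cov_add_right hA'B'C'D' hE' hB, cov_add_right hA'B'C' hD' hB,
    cov_add_right hA'B' hC' hB, cov_add_right hA' hB' hB,
    cov_add_right hA'B'C'D' hE' hC, cov_add_right hA'B'C' hD' hC,
    cov_add_right hA'B' hC' hC, cov_add_right hA' hB' hC,
    cov_add_right hA'B'C'D' hE' hD, cov_add_right hA'B'C' hD' hD,
    cov_add_right hA'B' hC' hD, cov_add_right hA' hB' hD,
    cov_add_right hA'B'C'D' hE' hE, cov_add_right hA'B'C' hD' hE,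
    cov_add_right hA'B' hC' hE, cov_add_right hA' hB' hE]
  ring

end Helpers

/-- Proposition 1, edges sharing one node, same SNP. -/
theorem nrss_cor_shared_node_same_snp
    {Ω Q V P : Type*} [MeasurableSpace Ω]
    (μ : Measure Ω) [IsProbabilityMeasure μ]
    (q : P → Q)
    (F : Q → Ω → ℝ) (G : V → Ω → ℝ) (H : V × P → Ω → ℝ)
    (σf2 σg2 σh2 : ℝ)
    (hIndep : iIndepFun (β := fun _ : Q ⊕ (V ⊕ V × P) => ℝ)
      (Sum.elim F (Sum.elim G H)) μ)
    (hFmem : ∀ i, MemLp (F i) 2 μ)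
    (hGmem : ∀ i, MemLp (G i) 2 μ)
    (hHmem : ∀ i, MemLp (H i) 2 μ)
    (hFvar : ∀ i, variance (F i) μ = σf2)
    (hGvar : ∀ i, variance (G i) μ = σg2)
    (hHvar : ∀ i, variance (H i) μ = σh2)
    (L : V → V → P → Ω → ℝ)
    (hL : ∀ v v' p ω, L v v' p ω = F (q p) ω + G v ω + G v' ω + H (v, p) ω + H (v', p) ω)
    (v1 v2 v3 : V) (h12 : v1 ≠ v2) (h13 : v1 ≠ v3) (h23 : v2 ≠ v3)
    (p : P)
    (hpos : 0 < σf2 + 2 * σg2 + 2 * σh2) :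
    cor μ (L v1 v3 p) (L v2 v3 p) = (σf2 + σg2 + σh2) / (σf2 + 2 * σg2 + 2 * σh2) := by
  classical
  set Φ := Sum.elim F (Sum.elim G H) with hΦ
  have ind : ∀ i j : Q ⊕ (V ⊕ V × P), i ≠ j → IndepFun (Φ i) (Φ j) μ :=
    fun i j h => hIndep.indepFun h
  -- abbreviations for indices
  have hL1 : L v1 v3 p = fun ω => F (q p) ω + G v1 ω + G v3 ω + H (v1, p) ω + H (v3, p) ω :=
    funext (hL v1 v3 p)
  have hL2 : L v2 v3 p = fun ω => F (q p) ω + G v2 ω + G v3 ω + H (v2, p) ω + H (v3, p) ω :=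
    funext (hL v2 v3 p)
  have hF := hFmem (q p)
  have hG1 := hGmem v1; have hG2 := hGmem v2; have hG3 := hGmem v3
  have hH1 := hHmem (v1, p); have hH2 := hHmem (v2, p); have hH3 := hHmem (v3, p)
  -- independence facts
  have iFG : ∀ v : V, IndepFun (F (q p)) (G v) μ :=
    fun v => ind (.inl (q p)) (.inr (.inl v)) (by simp)
  have iFH : ∀ w : V × P, IndepFun (F (q p)) (H w) μ :=
    fun w => ind (.inl (q p)) (.inr (.inr w)) (by simp)
  have iGG : ∀ v v' : V, v ≠ v' → IndepFun (G v) (G v') μ :=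
    fun v v' h => ind (.inr (.inl v)) (.inr (.inl v')) (by simp [h])
  have iGH : ∀ (v : V) (w : V × P), IndepFun (G v) (H w) μ :=
    fun v w => ind (.inr (.inl v)) (.inr (.inr w)) (by simp)
  have iHH : ∀ w w' : V × P, w ≠ w' → IndepFun (H w) (H w') μ :=
    fun w w' h => ind (.inr (.inr w)) (.inr (.inr w')) (by simp [h])
  have ne12 : ((v1, p) : V × P) ≠ (v2, p) := by simp [h12]
  have ne13 : ((v1, p) : V × P) ≠ (v3, p) := by simp [h13]
  have ne23 : ((v2, p) : V × P) ≠ (v3, p) := by simp [h23]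
  -- covariance of the two L's
  have hcov : cov μ (L v1 v3 p) (L v2 v3 p) = σf2 + σg2 + σh2 := by
    rw [hL1, hL2, cov_expand5 hF hG1 hG3 hH1 hH3 hF hG2 hG3 hH2 hH3,
      cov_self hF, cov_self hG3, cov_self hH3,
      cov_indep (iFG v2) hF hG2, cov_indep (iFG v3) hF hG3,
      cov_indep (iFH (v2, p)) hF hH2, cov_indep (iFH (v3, p)) hF hH3,
      cov_indep (iFG v1).symm hG1 hF, cov_indep (iGG v1 v2 h12) hG1 hG2,
      cov_indep (iGG v1 v3 h13) hG1 hG3, cov_indep (iGH v1 (v2, p)) hG1 hH2,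
      cov_indep (iGH v1 (v3, p)) hG1 hH3,
      cov_indep (iFG v3).symm hG3 hF, cov_indep (iGG v2 v3 h23).symm hG3 hG2,
      cov_indep (iGH v3 (v2, p)) hG3 hH2, cov_indep (iGH v3 (v3, p)) hG3 hH3,
      cov_indep (iFH (v1, p)).symm hH1 hF, cov_indep (iGH v2 (v1, p)).symm hH1 hG2,
      cov_indep (iGH v3 (v1, p)).symm hH1 hG3, cov_indep (iHH _ _ ne12) hH1 hH2,
      cov_indep (iHH _ _ ne13) hH1 hH3,
      cov_indep (iFH (v3, p)).symm hH3 hF, cov_indep (iGH v2 (v3, p)).symm hH3 hG2,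
      cov_indep (iGH v3 (v3, p)).symm hH3 hG3, cov_indep (iHH _ _ ne23).symm hH3 hH2]
    simp only [hFvar, hGvar, hHvar]
    ring
  -- variance of each L
  have hvar1 : variance (L v1 v3 p) μ = σf2 + 2 * σg2 + 2 * σh2 := by
    rw [← cov_self (by rw [hL1]; exact (((hF.add hG1).add hG3).add hH1).add hH3), hL1,
      cov_expand5 hF hG1 hG3 hH1 hH3 hF hG1 hG3 hH1 hH3,
      cov_self hF, cov_self hG1, cov_self hG3, cov_self hH1, cov_self hH3,
      cov_indep (iFG v1) hF hG1, cov_indep (iFG v3) hF hG3,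
      cov_indep (iFH (v1, p)) hF hH1, cov_indep (iFH (v3, p)) hF hH3,
      cov_indep (iFG v1).symm hG1 hF, cov_indep (iGG v1 v3 h13) hG1 hG3,
      cov_indep (iGH v1 (v1, p)) hG1 hH1, cov_indep (iGH v1 (v3, p)) hG1 hH3,
      cov_indep (iFG v3).symm hG3 hF, cov_indep (iGG v1 v3 h13).symm hG3 hG1,
      cov_indep (iGH v3 (v1, p)) hG3 hH1, cov_indep (iGH v3 (v3, p)) hG3 hH3,
      cov_indep (iFH (v1, p)).symm hH1 hF, cov_indep (iGH v1 (v1, p)).symm hH1 hG1,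
      cov_indep (iGH v3 (v1, p)).symm hH1 hG3, cov_indep (iHH _ _ ne13) hH1 hH3,
      cov_indep (iFH (v3, p)).symm hH3 hF, cov_indep (iGH v1 (v3, p)).symm hH3 hG1,
      cov_indep (iGH v3 (v3, p)).symm hH3 hG3, cov_indep (iHH _ _ ne13).symm hH3 hH1]
    simp only [hFvar, hGvar, hHvar]
    ring
  have hvar2 : variance (L v2 v3 p) μ = σf2 + 2 * σg2 + 2 * σh2 := by
    rw [← cov_self (by rw [hL2]; exact (((hF.add hG2).add hG3).add hH2).add hH3), hL2,
      cov_expand5 hF hG2 hG3 hH2 hH3 hF hG2 hG3 hH2 hH3,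
      cov_self hF, cov_self hG2, cov_self hG3, cov_self hH2, cov_self hH3,
      cov_indep (iFG v2) hF hG2, cov_indep (iFG v3) hF hG3,
      cov_indep (iFH (v2, p)) hF hH2, cov_indep (iFH (v3, p)) hF hH3,
      cov_indep (iFG v2).symm hG2 hF, cov_indep (iGG v2 v3 h23) hG2 hG3,
      cov_indep (iGH v2 (v2, p)) hG2 hH2, cov_indep (iGH v2 (v3, p)) hG2 hH3,
      cov_indep (iFG v3).symm hG3 hF, cov_indep (iGG v2 v3 h23).symm hG3 hG2,
      cov_indep (iGH v3 (v2, p)) hG3 hH2, cov_indep (iGH v3 (v3, p)) hG3 hH3,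
      cov_indep (iFH (v2, p)).symm hH2 hF, cov_indep (iGH v2 (v2, p)).symm hH2 hG2,
      cov_indep (iGH v3 (v2, p)).symm hH2 hG3, cov_indep (iHH _ _ ne23) hH2 hH3,
      cov_indep (iFH (v3, p)).symm hH3 hF, cov_indep (iGH v2 (v3, p)).symm hH3 hG2,
      cov_indep (iGH v3 (v3, p)).symm hH3 hG3, cov_indep (iHH _ _ ne23).symm hH3 hH2]
    simp only [hFvar, hGvar, hHvar]
    ring
  unfold cor
  rw [hcov, hvar1, hvar2, Real.mul_self_sqrt hpos.le]
end

section
/- (Master covariance lemma behind Proposition 1) Let v1 ≠ v2 and v3 ≠ v4 be nodes and p, p' SNPs. Then Cov(L(v1,v2,p), L(v3,v4,p')) = σ_f²·1[q(p) = q(p')] + σ_g²·|{v1,v2} ∩ {v3,v4}| + σ_h²·|{(v1,p),(v2,p)} ∩ {(v3,p'),(v4,p')}|, where 1[·] is the 0/1 indicator and |·| denotes cardinality of the finite intersection. -/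
open MeasureTheory ProbabilityTheory

section Aux

variable {Ω : Type*} [MeasurableSpace Ω] {μ : Measure Ω} [IsProbabilityMeasure μ]

omit [IsProbabilityMeasure μ] in
lemma integrable_mul_L2 {X Y : Ω → ℝ} (hX : MemLp X 2 μ) (hY : MemLp Y 2 μ) :
    Integrable (fun ω => X ω * Y ω) μ := by
  refine Integrable.mono' ((hX.integrable_sq.add hY.integrable_sq).div_const 2)
    (hX.aestronglyMeasurable.mul hY.aestronglyMeasurable) (ae_of_all _ fun ω => ?_)
  have := sq_nonneg (|X ω| - |Y ω|)
  simp only [Real.norm_eq_abs, abs_mul, Pi.add_apply]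
  nlinarith [sq_abs (X ω), sq_abs (Y ω), abs_nonneg (X ω), abs_nonneg (Y ω)]

lemma cov_eq_zero_of_indep {X Y : Ω → ℝ} (hX : MemLp X 2 μ) (hY : MemLp Y 2 μ)
    (h : IndepFun X Y μ) : cov μ X Y = 0 := by
  have hXi : Integrable X μ := hX.integrable one_le_two
  have hYi : Integrable Y μ := hY.integrable one_le_two
  have h' : IndepFun (fun ω => X ω - ∫ x, X x ∂μ) (fun ω => Y ω - ∫ x, Y x ∂μ) μ := by
    exact h.comp (measurable_id.sub_const _) (measurable_id.sub_const _)
  have := h'.integral_mul_eq_mul_integral (hXi.sub (integrable_const _)).aestronglyMeasurable (hYi.sub (integrable_const _)).aestronglyMeasurable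
  unfold cov
  rw [show (fun ω => (X ω - ∫ x, X x ∂μ) * (Y ω - ∫ x, Y x ∂μ))
      = ((fun ω => X ω - ∫ x, X x ∂μ) * fun ω => Y ω - ∫ x, Y x ∂μ) from rfl, this]
  rw [integral_sub hXi (integrable_const _), integral_sub hYi (integrable_const _)]
  simp

lemma cov_sum_sum {ι : Type*} (s t : Finset ι) (Z : ι → Ω → ℝ)
    (hZ : ∀ i, MemLp (Z i) 2 μ) :
    cov μ (fun ω => ∑ i ∈ s, Z i ω) (fun ω => ∑ j ∈ t, Z j ω)
      = ∑ i ∈ s, ∑ j ∈ t, cov μ (Z i) (Z j) := by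
  have hZi : ∀ i, Integrable (Z i) μ := fun i => (hZ i).integrable one_le_two
  have hC : ∀ i, MemLp (fun ω => Z i ω - ∫ x, Z i x ∂μ) 2 μ :=
    fun i => (hZ i).sub (memLp_const _)
  have hEs : (∫ x, (∑ i ∈ s, Z i x) ∂μ) = ∑ i ∈ s, ∫ x, Z i x ∂μ :=
    integral_finset_sum s (fun i _ => hZi i)
  have hEt : (∫ x, (∑ j ∈ t, Z j x) ∂μ) = ∑ j ∈ t, ∫ x, Z j x ∂μ :=
    integral_finset_sum t (fun j _ => hZi j)
  unfold cov
  calc ∫ ω, ((∑ i ∈ s, Z i ω) - ∫ x, (∑ i ∈ s, Z i x) ∂μ)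
        * ((∑ j ∈ t, Z j ω) - ∫ x, (∑ j ∈ t, Z j x) ∂μ) ∂μ
      = ∫ ω, ∑ i ∈ s, ∑ j ∈ t,
          (Z i ω - ∫ x, Z i x ∂μ) * (Z j ω - ∫ x, Z j x ∂μ) ∂μ := by
        congr 1; funext ω
        rw [hEs, hEt, ← Finset.sum_sub_distrib, ← Finset.sum_sub_distrib,
          Finset.sum_mul_sum]
    _ = ∑ i ∈ s, ∑ j ∈ t, cov μ (Z i) (Z j) := by
        rw [integral_finset_sum]
        · exact Finset.sum_congr rfl fun i _ => by
            rw [integral_finset_sum]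
            · rfl
            · exact fun j _ => integrable_mul_L2 (hC i) (hC j)
        · exact fun i _ => integrable_finset_sum _
            (fun j _ => integrable_mul_L2 (hC i) (hC j))

lemma card_pair_inter {α : Type*} [DecidableEq α] {a b c d : α} (hab : a ≠ b) (hcd : c ≠ d) :
    (({a, b} ∩ {c, d} : Finset α).card : ℝ)
      = (if a = c then 1 else 0) + (if a = d then 1 else 0)
        + (if b = c then 1 else 0) + (if b = d then 1 else 0) := by
  by_cases h1 : a = c <;> by_cases h2 : a = d <;> by_cases h3 : b = c <;> by_cases h4 : b = d <;>
    subst_vars <;> simp_all [Finset.inter_comm, Finset.pair_comm] <;> norm_num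

end Aux

/-- Master covariance lemma behind Proposition 1. -/
theorem nrss_cov_master
    {Ω Q V P : Type*} [MeasurableSpace Ω] [DecidableEq Q] [DecidableEq V] [DecidableEq P]
    (μ : Measure Ω) [IsProbabilityMeasure μ]
    (q : P → Q)
    (F : Q → Ω → ℝ) (G : V → Ω → ℝ) (H : V × P → Ω → ℝ)
    (σf2 σg2 σh2 : ℝ)
    (hIndep : iIndepFun
      (Sum.elim F (Sum.elim G H)) μ)
    (hFmem : ∀ i, MemLp (F i) 2 μ)
    (hGmem : ∀ i, MemLp (G i) 2 μ)
    (hHmem : ∀ i, MemLp (H i) 2 μ)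
    (hFvar : ∀ i, variance (F i) μ = σf2)
    (hGvar : ∀ i, variance (G i) μ = σg2)
    (hHvar : ∀ i, variance (H i) μ = σh2)
    (L : V → V → P → Ω → ℝ)
    (hL : ∀ v v' p ω, L v v' p ω = F (q p) ω + G v ω + G v' ω + H (v, p) ω + H (v', p) ω)
    (v1 v2 v3 v4 : V) (h12 : v1 ≠ v2) (h34 : v3 ≠ v4)
    (p p' : P) :
    cov μ (L v1 v2 p) (L v3 v4 p') =
      σf2 * (if q p = q p' then 1 else 0)
        + σg2 * (({v1, v2} ∩ {v3, v4} : Finset V).card : ℝ)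
        + σh2 * ((({(v1, p), (v2, p)} ∩ {(v3, p'), (v4, p')} : Finset (V × P))).card : ℝ) := by
  set Z : Q ⊕ (V ⊕ V × P) → Ω → ℝ := Sum.elim F (Sum.elim G H) with hZ
  have hZmem : ∀ i, MemLp (Z i) 2 μ := by
    rintro (i | i | i) <;> [exact hFmem i; exact hGmem i; exact hHmem i]
  set Vr : Q ⊕ (V ⊕ V × P) → ℝ := Sum.elim (fun _ => σf2) (Sum.elim (fun _ => σg2) (fun _ => σh2)) with hVr
  have covZ : ∀ i j, cov μ (Z i) (Z j) = if i = j then Vr i else 0 := by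
    intro i j
    by_cases h : i = j
    · subst h
      rw [if_pos rfl, cov_self (hZmem i)]
      rcases i with i | i | i
      · exact hFvar i
      · exact hGvar i
      · exact hHvar i
    · rw [if_neg h, cov_eq_zero_of_indep (hZmem i) (hZmem j) (hIndep.indepFun h)]
  set s1 : Finset (Q ⊕ (V ⊕ V × P)) := {Sum.inl (q p), Sum.inr (Sum.inl v1), Sum.inr (Sum.inl v2),
    Sum.inr (Sum.inr (v1, p)), Sum.inr (Sum.inr (v2, p))} with hs1
  set s2 : Finset (Q ⊕ (V ⊕ V × P)) := {Sum.inl (q p'), Sum.inr (Sum.inl v3), Sum.inr (Sum.inl v4),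
    Sum.inr (Sum.inr (v3, p')), Sum.inr (Sum.inr (v4, p'))} with hs2
  have h1 : L v1 v2 p = fun ω => ∑ i ∈ s1, Z i ω := by
    funext ω
    rw [hL, hs1, Finset.sum_insert (by simp), Finset.sum_insert (by simp [h12]),
      Finset.sum_insert (by simp), Finset.sum_insert (by simp [h12]), Finset.sum_singleton]
    simp only [hZ, Sum.elim_inl, Sum.elim_inr]
    ring
  have h2 : L v3 v4 p' = fun ω => ∑ j ∈ s2, Z j ω := by
    funext ω
    rw [hL, hs2, Finset.sum_insert (by simp), Finset.sum_insert (by simp [h34]),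
      Finset.sum_insert (by simp), Finset.sum_insert (by simp [h34]), Finset.sum_singleton]
    simp only [hZ, Sum.elim_inl, Sum.elim_inr]
    ring
  rw [h1, h2, cov_sum_sum s1 s2 Z hZmem]
  simp only [covZ]
  rw [card_pair_inter h12 h34, card_pair_inter (by simp [h12]) (by simp [h34])]
  simp only [hs1, hs2, Finset.sum_insert, Finset.mem_insert, Finset.mem_singleton,
    Finset.sum_singleton, Sum.inl.injEq, Sum.inr.injEq, Prod.mk.injEq, reduceCtorEq,
    or_false, false_or, not_or, h12, h34, not_false_iff, and_true, true_and,
    if_false, if_true, mul_ite, mul_one, mul_zero, ite_and]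
  simp only [hVr, Sum.elim_inl, Sum.elim_inr, mul_add, mul_ite, mul_one, mul_zero,
    add_zero, zero_add]
  ring
end
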